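/- Let v₀ ∈ L²(ℝ³; ℝ³), let α ∈ [1,3), R₀ > 0, V₀ > 0, and assume |v₀(x)| ≤ V₀ |x|^{-α} for almost every x with |x| > R₀. Then there exists a constant c > 0, depending only on ε, α and R₀ (and independent of x and of v₀), such that for every ε ∈ (0,1) and every x ∈ ℝ³ with |x| > R₀/(1-ε), one has ∫_{ℝ³} |v₀(y)|² / |x-y| dy ≤ (c/(ε|x|)) ‖v₀‖_{L²}² + (c/|x|^{1/2}) V₀ ‖v₀‖_{L²}. -/

import Mathlib

open MeasureTheory Set Metric
open scoped ENNReal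

noncomputable abbrev E3' := EuclideanSpace ℝ (Fin 3)

lemma vol_cb (x : E3') {s : ℝ} (hs : 0 ≤ s) :
    volume (closedBall x s) = ENNReal.ofReal (s ^ 3) * volume (ball (0:E3') 1) := by
  rw [Measure.addHaar_closedBall volume x hs, finrank_euclideanSpace_fin]

lemma hs_eq {t : ℝ} (ht : 0 < t) : t ^ (-(1:ℝ)/2) = Real.sqrt t⁻¹ := by
  rw [neg_div, Real.rpow_neg ht.le, Real.sqrt_inv, Real.sqrt_eq_rpow]

lemma one_dim_int {r : ℝ} (hr : 0 < r) :
    IntegrableOn (fun t : ℝ => (min (t ^ (-(1:ℝ)/2)) r) ^ 3) (Ioi 0) volume ∧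
    ∫ t in Ioi (0:ℝ), (min (t ^ (-(1:ℝ)/2)) r) ^ 3 = 3 * r := by
  have hb : (0:ℝ) < (r ^ 2)⁻¹ := by positivity
  have h1 : ∀ t ∈ Ioc (0:ℝ) ((r ^ 2)⁻¹), (min (t ^ (-(1:ℝ)/2)) r) ^ 3 = r ^ 3 := by
    intro t ht
    have hr2 : r ^ 2 ≤ t⁻¹ := by
      rw [← inv_inv (r ^ 2)]
      exact inv_anti₀ ht.1 ht.2
    have : r ≤ t ^ (-(1:ℝ)/2) := by
      rw [hs_eq ht.1, ← Real.sqrt_sq hr.le]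
      exact Real.sqrt_le_sqrt hr2
    rw [min_eq_right this]
  have h2 : ∀ t ∈ Ioi ((r ^ 2)⁻¹), (min (t ^ (-(1:ℝ)/2)) r) ^ 3 = t ^ (-(3:ℝ)/2) := by
    intro t ht
    have ht0 : 0 < t := lt_trans hb ht
    have hr2 : t⁻¹ ≤ r ^ 2 := by
      rw [← inv_inv (r ^ 2)]
      exact inv_anti₀ hb (le_of_lt ht)
    have hle : t ^ (-(1:ℝ)/2) ≤ r := by
      rw [hs_eq ht0, ← Real.sqrt_sq hr.le]
      exact Real.sqrt_le_sqrt hr2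
    rw [min_eq_left hle, ← Real.rpow_natCast (t ^ (-(1:ℝ)/2)) 3, ← Real.rpow_mul ht0.le]
    norm_num
  have hi1 : IntegrableOn (fun t : ℝ => (min (t ^ (-(1:ℝ)/2)) r) ^ 3)
      (Ioc 0 ((r ^ 2)⁻¹)) volume := by
    exact (integrableOn_const (C := r ^ 3) measure_Ioc_lt_top.ne).congr_fun
      (fun t ht => (h1 t ht).symm) measurableSet_Ioc
  have hi2 : IntegrableOn (fun t : ℝ => (min (t ^ (-(1:ℝ)/2)) r) ^ 3)
      (Ioi ((r ^ 2)⁻¹)) volume := by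
    exact (integrableOn_Ioi_rpow_of_lt (a := -(3:ℝ)/2) (by norm_num) hb).congr_fun
      (fun t ht => (h2 t ht).symm) measurableSet_Ioi
  have hunion : Ioc (0:ℝ) ((r ^ 2)⁻¹) ∪ Ioi ((r ^ 2)⁻¹) = Ioi 0 := Ioc_union_Ioi_eq_Ioi hb.le
  constructor
  · rw [← hunion]; exact hi1.union hi2
  · rw [← hunion, setIntegral_union (Ioc_disjoint_Ioi le_rfl) measurableSet_Ioi hi1 hi2,
      setIntegral_congr_fun measurableSet_Ioc h1, setIntegral_congr_fun measurableSet_Ioi h2,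
      setIntegral_const, integral_Ioi_rpow_of_lt (by norm_num) hb]
    have hb12 : ((r ^ 2)⁻¹ : ℝ) ^ (-(3:ℝ)/2 + 1) = r := by
      have he : (-(3:ℝ)/2 + 1) = -(1:ℝ)/2 := by norm_num
      rw [he, hs_eq hb, inv_inv, Real.sqrt_sq hr.le]
    rw [hb12, Real.volume_real_Ioc, smul_eq_mul, max_eq_left (by simpa using hb.le)]
    field_simp
    ring

lemma aux_kernel (x : E3') {r : ℝ} (hr : 0 < r) :
    IntegrableOn (fun y : E3' => (‖x - y‖ ^ 2)⁻¹) (ball x r) volume ∧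
    ∫ y in ball x r, (‖x - y‖ ^ 2)⁻¹ ≤ 3 * (volume (ball (0:E3') 1)).toReal * r := by
  have hmeas : Measurable fun y : E3' => (‖x - y‖ ^ 2)⁻¹ :=
    ((measurable_const.sub measurable_id).norm.pow_const 2).inv
  have hnn : ∀ y : E3', 0 ≤ (‖x - y‖ ^ 2)⁻¹ := fun y => by positivity
  set μ := volume.restrict (ball x r) with hμ
  have layer : ∫⁻ y, ENNReal.ofReal ((‖x - y‖ ^ 2)⁻¹) ∂μ
      = ∫⁻ t in Ioi (0:ℝ), μ {a : E3' | t ≤ (‖x - a‖ ^ 2)⁻¹} :=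
    lintegral_eq_lintegral_meas_le μ (ae_of_all _ hnn) hmeas.aemeasurable
  have hmb : ∀ t ∈ Ioi (0:ℝ), μ {a : E3' | t ≤ (‖x - a‖ ^ 2)⁻¹} ≤
      ENNReal.ofReal ((min (t ^ (-(1:ℝ)/2)) r) ^ 3) * volume (ball (0:E3') 1) := by
    intro t ht
    rw [mem_Ioi] at ht
    have hsub : {a : E3' | t ≤ (‖x - a‖ ^ 2)⁻¹} ∩ ball x r ⊆
        closedBall x (min (t ^ (-(1:ℝ)/2)) r) := by
      intro a ⟨ha1, ha2⟩
      simp only [mem_setOf_eq] at ha1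
      rw [mem_closedBall, le_min_iff]
      constructor
      · have hxa : ‖x - a‖ ^ 2 ≤ t⁻¹ := by
          rcases eq_or_lt_of_le (norm_nonneg (x - a)) with h0 | h0
          · rw [← h0]; simpa using (inv_pos.mpr ht).le
          · rw [← inv_inv (‖x - a‖ ^ 2)]
            exact inv_anti₀ ht ha1
        have : dist a x = ‖x - a‖ := by rw [dist_comm, dist_eq_norm]
        rw [this, hs_eq ht, ← Real.sqrt_sq (norm_nonneg (x - a))]
        exact Real.sqrt_le_sqrt hxa
      · exact (mem_ball.mp ha2).le
    calc μ {a : E3' | t ≤ (‖x - a‖ ^ 2)⁻¹}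
        = volume ({a : E3' | t ≤ (‖x - a‖ ^ 2)⁻¹} ∩ ball x r) :=
          Measure.restrict_apply' measurableSet_ball
      _ ≤ volume (closedBall x (min (t ^ (-(1:ℝ)/2)) r)) := measure_mono hsub
      _ = ENNReal.ofReal ((min (t ^ (-(1:ℝ)/2)) r) ^ 3) * volume (ball (0:E3') 1) :=
          vol_cb x (le_min (Real.rpow_pos_of_pos ht _).le hr.le)
  have hone := one_dim_int hr
  have key : ∫⁻ y, ENNReal.ofReal ((‖x - y‖ ^ 2)⁻¹) ∂μ ≤
      ENNReal.ofReal (3 * r) * volume (ball (0:E3') 1) := by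
    rw [layer]
    calc ∫⁻ t in Ioi (0:ℝ), μ {a : E3' | t ≤ (‖x - a‖ ^ 2)⁻¹}
        ≤ ∫⁻ t in Ioi (0:ℝ),
            ENNReal.ofReal ((min (t ^ (-(1:ℝ)/2)) r) ^ 3) * volume (ball (0:E3') 1) :=
          setLIntegral_mono' measurableSet_Ioi hmb
      _ = (∫⁻ t in Ioi (0:ℝ), ENNReal.ofReal ((min (t ^ (-(1:ℝ)/2)) r) ^ 3)) *
            volume (ball (0:E3') 1) := lintegral_mul_const' _ _ measure_ball_lt_top.ne
      _ ≤ ENNReal.ofReal (3 * r) * volume (ball (0:E3') 1) := by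
          gcongr
          rw [← ofReal_integral_eq_lintegral_ofReal hone.1
            ((ae_restrict_iff' measurableSet_Ioi).mpr (ae_of_all _ (fun t ht =>
              pow_nonneg (le_min (Real.rpow_pos_of_pos ht _).le hr.le) 3))), hone.2]
  have hfin : ∫⁻ y, ENNReal.ofReal ((‖x - y‖ ^ 2)⁻¹) ∂μ < ⊤ :=
    lt_of_le_of_lt key (ENNReal.mul_lt_top ENNReal.ofReal_lt_top measure_ball_lt_top)
  have hint : IntegrableOn (fun y : E3' => (‖x - y‖ ^ 2)⁻¹) (ball x r) volume := by
    refine ⟨hmeas.aestronglyMeasurable, ?_⟩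
    rw [hasFiniteIntegral_iff_ofReal (ae_of_all _ hnn)]
    exact hfin
  refine ⟨hint, ?_⟩
  rw [integral_eq_lintegral_of_nonneg_ae (ae_of_all _ hnn) hmeas.aestronglyMeasurable]
  calc (∫⁻ y, ENNReal.ofReal ((‖x - y‖ ^ 2)⁻¹) ∂μ).toReal
      ≤ (ENNReal.ofReal (3 * r) * volume (ball (0:E3') 1)).toReal := by
        exact ENNReal.toReal_mono
          (ENNReal.mul_lt_top ENNReal.ofReal_lt_top measure_ball_lt_top).ne key
    _ = (3 * r) * (volume (ball (0:E3') 1)).toReal := by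
        rw [ENNReal.toReal_mul, ENNReal.toReal_ofReal (by positivity)]
    _ = 3 * (volume (ball (0:E3') 1)).toReal * r := by ring

set_option maxHeartbeats 2000000 in
theorem stmt_0 (α R₀ : ℝ) (hα : 1 ≤ α) (hα' : α < 3) (hR₀ : 0 < R₀) :
    ∃ c > 0, ∀ V₀ : ℝ, 0 < V₀ →
      ∀ v₀ : EuclideanSpace ℝ (Fin 3) → EuclideanSpace ℝ (Fin 3),
        MemLp v₀ 2 volume →
        (∀ᵐ y ∂(volume : Measure (EuclideanSpace ℝ (Fin 3))),
          R₀ < ‖y‖ → ‖v₀ y‖ ≤ V₀ * ‖y‖ ^ (-α)) →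
        ∀ ε ∈ Set.Ioo (0:ℝ) 1, ∀ x : EuclideanSpace ℝ (Fin 3),
          R₀ / (1 - ε) < ‖x‖ →
          (∫ y, ‖v₀ y‖ ^ 2 / ‖x - y‖) ≤
            c / (ε * ‖x‖) * (eLpNorm v₀ 2 volume).toReal ^ 2
              + c / ‖x‖ ^ ((1:ℝ)/2) * (V₀ * (eLpNorm v₀ 2 volume).toReal) := by
  set K : ℝ := 3 * (volume (ball (0:E3') 1)).toReal with hKdef
  have hK : 0 < K := by
    have h1 : (0:ℝ≥0∞) < volume (ball (0:E3') 1) := measure_ball_pos volume 0 one_pos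
    have h2 := (measure_ball_lt_top : volume (ball (0:E3') 1) < ⊤).ne
    have := ENNReal.toReal_pos h1.ne' h2
    positivity
  set M : ℝ := max 1 (R₀ ^ (1 - α)) with hMdef
  have hM : (1:ℝ) ≤ M := le_max_left _ _
  have hsK : 0 ≤ Real.sqrt K := Real.sqrt_nonneg _
  refine ⟨2 + 2 * M * Real.sqrt K, by positivity, ?_⟩
  intro V₀ hV₀ v₀ hmem hbd ε hε x hx
  set c : ℝ := 2 + 2 * M * Real.sqrt K with hcdef
  have h0K : 0 ≤ 2 * M * Real.sqrt K := mul_nonneg (by linarith) hsK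
  have hc2 : (2:ℝ) ≤ c := by rw [hcdef]; linarith
  have hcK : 2 * M * Real.sqrt K ≤ c := by rw [hcdef]; linarith
  obtain ⟨hε1, hε2⟩ := hε
  have h1ε : 0 < 1 - ε := by linarith
  have hnx : 0 < ‖x‖ := lt_trans (div_pos hR₀ h1ε) hx
  have hRnx : R₀ < ‖x‖ * (1 - ε) := (div_lt_iff₀ h1ε).mp hx
  set ρ : ℝ := min ε (1/2) with hρdef
  have hρ0 : 0 < ρ := lt_min hε1 (by norm_num)
  have hρ2 : ρ ≤ 1/2 := min_le_right _ _
  have hρε' : ρ ≤ ε := min_le_left _ _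
  have hρε : ε ≤ 2 * ρ := by
    rcases le_total ε (1/2) with h | h
    · rw [hρdef, min_eq_left h]; linarith
    · rw [hρdef, min_eq_right h]; linarith
  set r : ℝ := ρ * ‖x‖ with hrdef
  have hr : 0 < r := mul_pos hρ0 hnx
  have hrx : r ≤ ‖x‖ / 2 := by
    rw [hrdef]
    have := mul_le_mul_of_nonneg_right hρ2 hnx.le
    linarith
  set t : ℝ := (1 - ρ) * ‖x‖ with htdef
  have hts : R₀ < t := by
    have h1 : (1 - ε) * ‖x‖ ≤ t := by
      rw [htdef]
      exact mul_le_mul_of_nonneg_right (by linarith) hnx.le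
    have h2 := hRnx
    rw [mul_comm] at h2
    linarith
  have ht0 : 0 < t := lt_trans hR₀ hts
  have ht2 : ‖x‖ / 2 ≤ t := by
    rw [htdef]
    have := mul_le_mul_of_nonneg_right (show (1/2:ℝ) ≤ 1 - ρ by linarith) hnx.le
    linarith
  -- S bound
  set S : ℝ := V₀ * t ^ (-α) with hSdef
  have hS0 : 0 ≤ S := mul_nonneg hV₀.le (Real.rpow_nonneg ht0.le _)
  have hSb : S ≤ V₀ * M * (2 / ‖x‖) := by
    have e1 : t ^ (-α) = t⁻¹ * t ^ (1 - α) := by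
      rw [← Real.rpow_neg_one t, ← Real.rpow_add ht0]
      ring_nf
    have e2 : t ^ (1 - α) ≤ M := le_trans
      (Real.rpow_le_rpow_of_nonpos hR₀ hts.le (by linarith)) (le_max_right _ _)
    have e3 : t⁻¹ ≤ 2 / ‖x‖ := by
      rw [← inv_div ‖x‖ 2]
      exact inv_anti₀ (by positivity) ht2
    have e4 : 0 ≤ t ^ (1 - α) := (Real.rpow_nonneg ht0.le _)
    have e5 : 0 < t⁻¹ := inv_pos.mpr ht0
    rw [hSdef, e1]
    calc V₀ * (t⁻¹ * t ^ (1 - α)) ≤ V₀ * ((2 / ‖x‖) * M) := by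
          apply mul_le_mul_of_nonneg_left ?_ hV₀.le
          exact mul_le_mul e3 e2 e4 (by positivity)
      _ = V₀ * M * (2 / ‖x‖) := by ring
  -- L² facts
  set N : ℝ := (eLpNorm v₀ 2 volume).toReal with hNdef
  have hN0 : 0 ≤ N := ENNReal.toReal_nonneg
  have hrpow2 : ∀ y : E3', ‖v₀ y‖ ^ ((2:ℝ≥0∞).toReal) = ‖v₀ y‖ ^ 2 := by
    intro y
    rw [ENNReal.toReal_ofNat, ← Real.rpow_natCast ‖v₀ y‖ 2]
    norm_num
  have hv2 : Integrable (fun y => ‖v₀ y‖ ^ 2) volume := by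
    have h := hmem.integrable_norm_rpow two_ne_zero ENNReal.ofNat_ne_top
    exact h.congr (ae_of_all _ fun y => hrpow2 y)
  have hNsq : ∫ y, ‖v₀ y‖ ^ 2 = N ^ 2 := by
    have h := hmem.eLpNorm_eq_integral_rpow_norm two_ne_zero ENNReal.ofNat_ne_top
    have hi : 0 ≤ ∫ a, ‖v₀ a‖ ^ ((2:ℝ≥0∞).toReal) :=
      integral_nonneg fun a => Real.rpow_nonneg (norm_nonneg _) _
    rw [hNdef, h, ENNReal.toReal_ofReal (Real.rpow_nonneg hi _)]
    rw [← Real.rpow_natCast ((∫ a, ‖v₀ a‖ ^ ((2:ℝ≥0∞).toReal)) ^ ((2:ℝ≥0∞).toReal)⁻¹) 2,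
      ← Real.rpow_mul hi]
    simp only [ENNReal.toReal_ofNat]
    norm_num
  -- trivial case `v₀ = 0`
  by_cases hNz : N = 0
  · have h0 : eLpNorm v₀ 2 volume = 0 := by
      rcases (ENNReal.toReal_eq_zero_iff _).mp hNz with h | h
      · exact h
      · exact absurd h hmem.2.ne
    have hvz : v₀ =ᵐ[(volume : Measure E3')] 0 :=
      (eLpNorm_eq_zero_iff hmem.1 two_ne_zero).mp h0
    have hLHS : ∫ y, ‖v₀ y‖ ^ 2 / ‖x - y‖ = 0 := by
      rw [integral_congr_ae (g := fun _ => (0:ℝ))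
        (by filter_upwards [hvz] with y hy; simp [hy]), integral_zero]
    rw [hLHS, hNz]
    norm_num
  have hN : 0 < N := lt_of_le_of_ne hN0 (Ne.symm hNz)
  -- AM-GM parameter
  set s : ℝ := Real.sqrt (K * r) with hsdef
  have hs2 : s ^ 2 = K * r := Real.sq_sqrt (by positivity)
  have hs0 : 0 < s := Real.sqrt_pos.mpr (by positivity)
  set a : ℝ := s / N with hadef
  have ha : 0 < a := div_pos hs0 hN
  obtain ⟨hki, hkb⟩ := aux_kernel x hr
  -- the dominating function
  set g : E3' → ℝ := fun y => ‖v₀ y‖ ^ 2 / r +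
    (ball x r).indicator (fun y => S * (a/2 * ‖v₀ y‖ ^ 2 + 1/(2*a) * (‖x - y‖ ^ 2)⁻¹)) y
    with hgdef
  have hBint : IntegrableOn
      (fun y => S * (a/2 * ‖v₀ y‖ ^ 2 + 1/(2*a) * (‖x - y‖ ^ 2)⁻¹)) (ball x r) volume :=
    (((hv2.integrableOn).const_mul (a/2)).add (hki.const_mul (1/(2*a)))).const_mul S
  have hgi : Integrable g volume :=
    (hv2.div_const r).add (hBint.integrable_indicator measurableSet_ball)
  have ht_r : t = ‖x‖ - r := by rw [htdef, hrdef]; ring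
  have hfg : ∀ᵐ y ∂(volume : Measure E3'), ‖v₀ y‖ ^ 2 / ‖x - y‖ ≤ g y := by
    filter_upwards [hbd] with y hy
    simp only [hgdef]
    by_cases hyB : y ∈ ball x r
    · have hxyr : ‖x - y‖ < r := by
        have h2 := mem_ball.mp hyB
        rw [dist_eq_norm] at h2
        rw [norm_sub_rev]
        exact h2
      have hty : t < ‖y‖ := by
        have h1 : ‖x‖ - ‖y‖ ≤ ‖x - y‖ := norm_sub_norm_le x y
        rw [ht_r]; linarith
      have hvy : ‖v₀ y‖ ≤ S := by
        refine le_trans (hy (lt_trans hts hty)) ?_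
        rw [hSdef]
        exact mul_le_mul_of_nonneg_left
          (Real.rpow_le_rpow_of_nonpos ht0 hty.le (by linarith)) hV₀.le
      rw [indicator_of_mem hyB]
      rcases eq_or_lt_of_le (norm_nonneg (x - y)) with h0 | h0
      · rw [← h0, div_zero]
        have e0 : (((0:ℝ)) ^ 2)⁻¹ = 0 := by norm_num
        rw [e0, mul_zero, add_zero]
        exact add_nonneg (by positivity)
          (mul_nonneg hS0 (mul_nonneg (by linarith) (sq_nonneg _)))
      · have key : ‖v₀ y‖ * ‖x - y‖⁻¹ ≤ a/2 * ‖v₀ y‖ ^ 2 + 1/(2*a) * (‖x - y‖ ^ 2)⁻¹ := by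
          have hinv : (‖x - y‖ ^ 2)⁻¹ = (‖x - y‖⁻¹) ^ 2 := by rw [inv_pow]
          rw [hinv]
          have hid : a/2 * ‖v₀ y‖ ^ 2 + 1/(2*a) * (‖x - y‖⁻¹) ^ 2 - ‖v₀ y‖ * ‖x - y‖⁻¹
              = (a * ‖v₀ y‖ - ‖x - y‖⁻¹) ^ 2 / (2*a) := by
            field_simp
            ring
          have hnn2 := div_nonneg (sq_nonneg (a * ‖v₀ y‖ - ‖x - y‖⁻¹))
            (by positivity : (0:ℝ) ≤ 2*a)
          linarith [hid ▸ hnn2]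
        calc ‖v₀ y‖ ^ 2 / ‖x - y‖ ≤ S * ‖v₀ y‖ / ‖x - y‖ := by
              gcongr
              rw [pow_two]
              exact mul_le_mul_of_nonneg_right hvy (norm_nonneg _)
          _ = S * (‖v₀ y‖ * ‖x - y‖⁻¹) := by
              rw [mul_div_assoc, div_eq_mul_inv]
          _ ≤ S * (a/2 * ‖v₀ y‖ ^ 2 + 1/(2*a) * (‖x - y‖ ^ 2)⁻¹) :=
              mul_le_mul_of_nonneg_left key hS0
          _ ≤ ‖v₀ y‖ ^ 2 / r +
              S * (a/2 * ‖v₀ y‖ ^ 2 + 1/(2*a) * (‖x - y‖ ^ 2)⁻¹) :=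
              le_add_of_nonneg_left (by positivity)
    · rw [indicator_of_notMem hyB, add_zero]
      have hxy : r ≤ ‖x - y‖ := by
        have h2 := mem_ball.not.mp hyB
        push_neg at h2
        rw [dist_eq_norm] at h2
        rw [norm_sub_rev]
        exact h2
      gcongr
  -- set-integral bounds
  have hint1 : ∫ y in ball x r, ‖v₀ y‖ ^ 2 ≤ N ^ 2 := by
    rw [← hNsq]
    exact setIntegral_le_integral hv2 (ae_of_all _ fun y => sq_nonneg _)
  -- main chain
  have main : ∫ y, ‖v₀ y‖ ^ 2 / ‖x - y‖ ≤ N ^ 2 / r + S * (s * N) := by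
    calc ∫ y, ‖v₀ y‖ ^ 2 / ‖x - y‖ ≤ ∫ y, g y :=
          integral_mono_of_nonneg (ae_of_all _ fun y => by positivity) hgi hfg
      _ = (∫ y, ‖v₀ y‖ ^ 2) / r + ∫ y in ball x r,
            S * (a/2 * ‖v₀ y‖ ^ 2 + 1/(2*a) * (‖x - y‖ ^ 2)⁻¹) := by
          simp only [hgdef]
          rw [integral_add (hv2.div_const r) (hBint.integrable_indicator measurableSet_ball),
            integral_indicator measurableSet_ball, integral_div]
      _ = N ^ 2 / r + S * (a/2 * (∫ y in ball x r, ‖v₀ y‖ ^ 2)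
            + 1/(2*a) * ∫ y in ball x r, (‖x - y‖ ^ 2)⁻¹) := by
          rw [hNsq, integral_const_mul, integral_add ((hv2.integrableOn).const_mul (a/2))
            (hki.const_mul (1/(2*a))), integral_const_mul, integral_const_mul]
      _ ≤ N ^ 2 / r + S * (a/2 * N ^ 2 + 1/(2*a) * (K * r)) := by
          have hKr : ∫ y in ball x r, (‖x - y‖ ^ 2)⁻¹ ≤ K * r := hkb
          gcongr
      _ = N ^ 2 / r + S * (s * N) := by
          rw [hadef, ← hs2]
          field_simp
          ring
  -- bound the two terms
  have hterm1 : N ^ 2 / r ≤ c / (ε * ‖x‖) * N ^ 2 := by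
    have hinv : 1 / r ≤ c / (ε * ‖x‖) := by
      rw [div_le_div_iff₀ hr (by positivity)]
      have h1 : ε ≤ c * ρ := by
        have h2 := mul_le_mul_of_nonneg_right hc2 hρ0.le
        linarith
      calc 1 * (ε * ‖x‖) = ε * ‖x‖ := one_mul _
        _ ≤ (c * ρ) * ‖x‖ := mul_le_mul_of_nonneg_right h1 hnx.le
        _ = c * (ρ * ‖x‖) := by ring
        _ = c * r := by rw [hrdef]
    calc N ^ 2 / r = N ^ 2 * (1 / r) := by ring
      _ ≤ N ^ 2 * (c / (ε * ‖x‖)) := mul_le_mul_of_nonneg_left hinv (sq_nonneg N)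
      _ = c / (ε * ‖x‖) * N ^ 2 := by ring
  have hterm2 : S * (s * N) ≤ c / ‖x‖ ^ ((1:ℝ)/2) * (V₀ * N) := by
    have hsx0 : 0 < Real.sqrt ‖x‖ := Real.sqrt_pos.mpr hnx
    have hxr : ‖x‖ ^ ((1:ℝ)/2) = Real.sqrt ‖x‖ := by
      rw [Real.sqrt_eq_rpow]
    have hsle : s ≤ Real.sqrt K * Real.sqrt ‖x‖ := by
      rw [hsdef, ← Real.sqrt_mul hK.le]
      apply Real.sqrt_le_sqrt
      rw [hrdef]
      have hρ1 : ρ * ‖x‖ ≤ ‖x‖ := by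
        have := mul_le_mul_of_nonneg_right (show ρ ≤ 1 by linarith) hnx.le
        linarith
      exact mul_le_mul_of_nonneg_left hρ1 hK.le
    calc S * (s * N) ≤ (V₀ * M * (2 / ‖x‖)) * ((Real.sqrt K * Real.sqrt ‖x‖) * N) := by
          apply mul_le_mul hSb (mul_le_mul_of_nonneg_right hsle hN0)
            (mul_nonneg hs0.le hN0)
            (mul_nonneg (mul_nonneg hV₀.le (by linarith)) (by positivity))
      _ = (2 * M * Real.sqrt K) * (V₀ * N) * (Real.sqrt ‖x‖ / ‖x‖) := by ring
      _ = (2 * M * Real.sqrt K) / Real.sqrt ‖x‖ * (V₀ * N) := by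
          have hss : Real.sqrt ‖x‖ / ‖x‖ = 1 / Real.sqrt ‖x‖ := by
            rw [div_eq_div_iff hnx.ne' (Real.sqrt_pos.mpr hnx).ne', one_mul,
              Real.mul_self_sqrt hnx.le]
          rw [hss]
          ring
      _ ≤ c / ‖x‖ ^ ((1:ℝ)/2) * (V₀ * N) := by
          rw [hxr]
          gcongr
  calc ∫ y, ‖v₀ y‖ ^ 2 / ‖x - y‖ ≤ N ^ 2 / r + S * (s * N) := main
    _ ≤ c / (ε * ‖x‖) * N ^ 2 + c / ‖x‖ ^ ((1:ℝ)/2) * (V₀ * N) := add_le_add hterm1 hterm2
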